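/- arXiv:2603.18984 — 2 statements merged into one kernel-verified Lean document; each statement's English description precedes it below -/
import Mathlib

section
/- Let E₁ ⊇ E be sets of finite perimeter with E₁ ∩ Ω = E ∩ Ω, and suppose that for H^{N−1}-a.e. z ∈ (∂*E₁ \ ∂*E) ∩ ∂*Ω one has ν_{E₁}(z) = −ν_Ω(z). Then Γ⁺_{E₁} = Γ⁺_E ∩ ∂*E₁ up to H^{N−1}-null sets, where Γ⁺_G = {x ∈ ∂*G ∩ ∂*Ω : ν_G(x) = ν_Ω(x)}. -/
open MeasureTheory Metric Filter Set
open scoped ENNReal Topology NNReal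

noncomputable section

/-- Euclidean space `ℝ^N`. -/
abbrev EucN (N : ℕ) := EuclideanSpace ℝ (Fin N)

variable {N : ℕ}

/-- The open upper half-ball `B⁺_{r,ν}(x)`. -/
def upperHalfBall (x ν : EucN N) (r : ℝ) : Set (EucN N) :=
  {z : EucN N | dist z x < r ∧ 0 < (inner ℝ (z - x) ν : ℝ)}

/-- The open lower half-ball `B⁻_{r,ν}(x)`. -/
def lowerHalfBall (x ν : EucN N) (r : ℝ) : Set (EucN N) :=
  {z : EucN N | dist z x < r ∧ (inner ℝ (z - x) ν : ℝ) < 0}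

/-- `ν` is the measure-theoretic outer unit normal of `E` at `x`. -/
def IsOuterNormal (E : Set (EucN N)) (x ν : EucN N) : Prop :=
  ‖ν‖ = 1 ∧
    Tendsto (fun r => volume (E ∩ upperHalfBall x ν r) / volume (upperHalfBall x ν r))
      (𝓝[>] (0:ℝ)) (𝓝 0) ∧
    Tendsto (fun r => volume (E ∩ lowerHalfBall x ν r) / volume (lowerHalfBall x ν r))
      (𝓝[>] (0:ℝ)) (𝓝 1)

/-- The reduced boundary `∂*E`: points where an outer normal exists. -/
def redBoundary (E : Set (EucN N)) : Set (EucN N) := {x : EucN N | ∃ ν, IsOuterNormal E x ν}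

/- The outer normal `ν_E(x)` (an arbitrary choice when it does not exist). -/
open Classical in
def outerNormal (E : Set (EucN N)) (x : EucN N) : EucN N :=
  if h : ∃ ν, IsOuterNormal E x ν then h.choose else 0

/-- The `(N-1)`-dimensional Hausdorff measure on `ℝ^N`. -/
def HN1 (N : ℕ) : Measure (EucN N) := μH[(N : ℝ) - 1]

/-- A set of finite perimeter: `H^{N-1}(∂*E) < ∞`. -/
def HasFinPer (E : Set (EucN N)) : Prop :=
  MeasurableSet E ∧ HN1 N (redBoundary E) < ⊤

/-- A set of locally finite perimeter: its intersection with any ball has finite perimeter. -/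
def HasLocFinPer (E : Set (EucN N)) : Prop :=
  MeasurableSet E ∧ ∀ (x : EucN N) (r : ℝ), HN1 N (redBoundary (E ∩ ball x r)) < ⊤

/-- The perimeter `P(E) = H^{N-1}(∂*E)`, as a real number. -/
def peri (E : Set (EucN N)) : ℝ := (HN1 N (redBoundary E)).toReal

/-- `ω_n`: the Lebesgue measure of the unit ball of `ℝ^n`. -/
def omegaBall (n : ℕ) : ℝ := (volume (ball (0 : EuclideanSpace ℝ (Fin n)) 1)).toReal

/-- The open cylinder centered at `x`, with axis `ν`, radius `r` and height `2h`. -/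
def cylGen (x ν : EucN N) (r h : ℝ) : Set (EucN N) :=
  {z : EucN N | ‖(z - x) - (inner ℝ (z - x) ν : ℝ) • ν‖ < r ∧ |(inner ℝ (z - x) ν : ℝ)| < h}

/-- The upper half `C⁺(x,r)` of the cylinder `C(x,r)`. -/
def cylPlus (x ν : EucN N) (r : ℝ) : Set (EucN N) :=
  {z ∈ cylGen x ν r r | 0 < (inner ℝ (z - x) ν : ℝ)}

/-- The lower half `C⁻(x,r)` of the cylinder `C(x,r)`. -/
def cylMinus (x ν : EucN N) (r : ℝ) : Set (EucN N) :=
  {z ∈ cylGen x ν r r | (inner ℝ (z - x) ν : ℝ) < 0}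

/-- `Γ⁺_E`: common boundary points with equal normals. -/
def ΓPlus (E Ω : Set (EucN N)) : Set (EucN N) :=
  {x ∈ redBoundary E ∩ redBoundary Ω | outerNormal E x = outerNormal Ω x}

/-- `Γ⁻_E`: common boundary points with opposite normals. -/
def ΓMinus (E Ω : Set (EucN N)) : Set (EucN N) :=
  {x ∈ redBoundary E ∩ redBoundary Ω | outerNormal E x = -outerNormal Ω x}

/-- `x` is a point of `(N-1)`-dimensional density `1` for `Γ`. -/
def HDensOne (Γ : Set (EucN N)) (x : EucN N) : Prop :=
  Tendsto (fun r => HN1 N (Γ ∩ closedBall x r) /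
      ENNReal.ofReal (omegaBall (N-1) * r ^ (N-1)))
    (𝓝[>] (0:ℝ)) (𝓝 1)


section Aux

open scoped Pointwise

variable {N : ℕ}

lemma isOuterNormal_outerNormal {E : Set (EucN N)} {x : EucN N} (hx : x ∈ redBoundary E) :
    IsOuterNormal E x (outerNormal E x) := by
  have hx' : ∃ ν, IsOuterNormal E x ν := hx
  rw [outerNormal, dif_pos hx']
  exact hx'.choose_spec

lemma lowerHalfBall_eq_upper (x ν : EucN N) (r : ℝ) :
    lowerHalfBall x ν r = upperHalfBall x (-ν) r := by
  ext z
  simp [lowerHalfBall, upperHalfBall, inner_neg_right, neg_pos]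

lemma isOpen_upperHalfBall (x ν : EucN N) (r : ℝ) : IsOpen (upperHalfBall x ν r) := by
  have : upperHalfBall x ν r
      = {z : EucN N | dist z x < r} ∩ {z : EucN N | 0 < (inner ℝ (z - x) ν : ℝ)} := rfl
  rw [this]
  exact (isOpen_lt (continuous_id.dist continuous_const) continuous_const).inter
    (isOpen_lt continuous_const ((continuous_id.sub continuous_const).inner continuous_const))

lemma upperHalfBall_subset_ball (x ν : EucN N) (r : ℝ) :
    upperHalfBall x ν r ⊆ ball x r := fun z hz => mem_ball.mpr hz.1

lemma upperHalfBall_nonempty (x ν : EucN N) (hν : ν ≠ 0) :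
    (upperHalfBall x ν 1).Nonempty := by
  have hn : 0 < ‖ν‖ := norm_pos_iff.mpr hν
  refine ⟨x + (‖ν‖⁻¹ / 2) • ν, ?_, ?_⟩
  · rw [dist_eq_norm, add_sub_cancel_left, norm_smul]
    have : ‖(‖ν‖⁻¹ / 2 : ℝ)‖ = ‖ν‖⁻¹ / 2 := by
      rw [Real.norm_of_nonneg]; positivity
    rw [this, div_mul_eq_mul_div, inv_mul_cancel₀ hn.ne']
    norm_num
  · rw [add_sub_cancel_left, real_inner_smul_left]
    have : (0:ℝ) < inner ℝ ν ν := by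
      rw [real_inner_self_eq_norm_mul_norm]; positivity
    positivity

lemma volume_image_affine (x : EucN N) {r : ℝ} (hr : 0 < r) (S : Set (EucN N)) :
    volume ((fun y => x + r • y) '' S) = ENNReal.ofReal (r ^ N) * volume S := by
  have h1 : (fun y : EucN N => x + r • y) '' S = (fun y : EucN N => x + y) '' (r • S) := by
    rw [← Set.image_smul, Set.image_image]
  have h2 : (fun y : EucN N => x + y) '' (r • S) = (fun z : EucN N => -x + z) ⁻¹' (r • S) := by
    ext z
    simp only [Set.mem_image, Set.mem_preimage]
    constructor
    · rintro ⟨y, hy, rfl⟩; simpa using hy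
    · intro h; exact ⟨-x + z, h, by abel⟩
  rw [h1, h2, measure_preimage_add, Measure.addHaar_smul,
    finrank_euclideanSpace_fin, abs_of_pos (pow_pos hr N)]

lemma upperHalfBall_eq_image (x ν : EucN N) {r : ℝ} (hr : 0 < r) :
    upperHalfBall x ν r = (fun y => x + r • y) '' upperHalfBall 0 ν 1 := by
  ext z
  constructor
  · rintro ⟨h1, h2⟩
    refine ⟨r⁻¹ • (z - x), ⟨?_, ?_⟩, ?_⟩
    · rw [dist_zero_right, norm_smul, Real.norm_of_nonneg (by positivity)]
      rw [dist_eq_norm] at h1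
      calc r⁻¹ * ‖z - x‖ < r⁻¹ * r := by
            exact mul_lt_mul_of_pos_left h1 (inv_pos.mpr hr)
        _ = 1 := inv_mul_cancel₀ hr.ne'
    · rw [sub_zero, real_inner_smul_left]
      exact mul_pos (inv_pos.mpr hr) h2
    · simp only [smul_smul, mul_inv_cancel₀ hr.ne', one_smul]
      abel
  · rintro ⟨y, ⟨h1, h2⟩, rfl⟩
    rw [dist_zero_right] at h1
    rw [sub_zero] at h2
    constructor
    · rw [dist_eq_norm, add_sub_cancel_left, norm_smul, Real.norm_of_nonneg hr.le]
      calc r * ‖y‖ < r * 1 := mul_lt_mul_of_pos_left h1 hr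
        _ = r := mul_one r
    · rw [add_sub_cancel_left, real_inner_smul_left]
      exact mul_pos hr h2

/-- Key lemma: if `E ⊆ E₁` and both admit an outer normal at `x`, the normals agree. -/
lemma outerNormal_unique_mono {E E₁ : Set (EucN N)} (hEm : MeasurableSet E)
    (hE₁m : MeasurableSet E₁) (hsub : E ⊆ E₁) {x ν μ : EucN N}
    (hν : IsOuterNormal E x ν) (hμ : IsOuterNormal E₁ x μ) : ν = μ := by
  by_contra hne
  obtain ⟨hν1, hνu, hνl⟩ := hν
  obtain ⟨hμ1, hμu, hμl⟩ := hμ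
  have hν0 : ν ≠ 0 := fun h => by simp [h] at hν1
  have hμ0 : μ ≠ 0 := fun h => by simp [h] at hμ1
  -- strict Cauchy-Schwarz
  have hinner : (inner ℝ ν μ : ℝ) < 1 := by
    rcases lt_or_eq_of_le (real_inner_le_norm ν μ) with h | h
    · rwa [hν1, hμ1, one_mul] at h
    · exfalso
      apply hne
      have h2 : (inner ℝ ν μ : ℝ) = ‖ν‖ * ‖μ‖ := h
      have := (inner_eq_norm_mul_iff_real (x := ν) (y := μ)).mp h2
      rwa [hν1, hμ1, one_smul, one_smul] at this
  set w : EucN N := μ - ν with hw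
  have hw0 : w ≠ 0 := sub_ne_zero.mpr (fun h => hne h.symm)
  have hwn : 0 < ‖w‖ := norm_pos_iff.mpr hw0
  have hselfν : (inner ℝ ν ν : ℝ) = 1 := by
    rw [real_inner_self_eq_norm_mul_norm, hν1]; norm_num
  have hselfμ : (inner ℝ μ μ : ℝ) = 1 := by
    rw [real_inner_self_eq_norm_mul_norm, hμ1]; norm_num
  have hwμ : 0 < (inner ℝ w μ : ℝ) := by
    rw [hw, inner_sub_left, hselfμ]
    have hc := real_inner_comm ν μ
    linarith
  have hwν : (inner ℝ w ν : ℝ) < 0 := by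
    rw [hw, inner_sub_left, hselfν]
    have : (inner ℝ μ ν : ℝ) = inner ℝ ν μ := real_inner_comm ν μ
    linarith
  -- the wedge point
  set y₀ : EucN N := (‖w‖⁻¹ / 2) • w with hy₀
  have hc : (0:ℝ) < ‖w‖⁻¹ / 2 := by positivity
  have hy₀K : y₀ ∈ lowerHalfBall 0 ν 1 ∩ upperHalfBall 0 μ 1 := by
    have hd : dist y₀ 0 < 1 := by
      rw [dist_zero_right, hy₀, norm_smul, Real.norm_of_nonneg hc.le,
        div_mul_eq_mul_div, inv_mul_cancel₀ hwn.ne']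
      norm_num
    refine ⟨⟨hd, ?_⟩, hd, ?_⟩
    · rw [sub_zero, hy₀, real_inner_smul_left]
      exact mul_neg_of_pos_of_neg hc hwν
    · rw [sub_zero, hy₀, real_inner_smul_left]
      exact mul_pos hc hwμ
  -- notation
  set Bm : ℝ → Set (EucN N) := fun r => lowerHalfBall x ν r with hBm
  set Bp : ℝ → Set (EucN N) := fun r => upperHalfBall x μ r with hBp
  set K1 : Set (EucN N) := lowerHalfBall 0 ν 1 ∩ upperHalfBall 0 μ 1 with hK1
  have hBm_eq : ∀ r : ℝ, Bm r = upperHalfBall x (-ν) r := fun r => lowerHalfBall_eq_upper x ν r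
  have hBm0 : lowerHalfBall 0 ν 1 = upperHalfBall 0 (-ν) 1 := lowerHalfBall_eq_upper 0 ν 1
  have hinj : ∀ r : ℝ, 0 < r → Function.Injective (fun y : EucN N => x + r • y) := by
    intro r hr a b hab
    simp only [add_right_inj] at hab
    exact smul_right_injective _ hr.ne' hab
  -- scaling of volumes
  have hvolBm : ∀ r : ℝ, 0 < r →
      volume (Bm r) = ENNReal.ofReal (r ^ N) * volume (lowerHalfBall 0 ν 1) := by
    intro r hr
    rw [hBm_eq r, hBm0, upperHalfBall_eq_image x (-ν) hr, volume_image_affine x hr]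
  have hvolBp : ∀ r : ℝ, 0 < r →
      volume (Bp r) = ENNReal.ofReal (r ^ N) * volume (upperHalfBall 0 μ 1) := by
    intro r hr
    rw [show Bp r = upperHalfBall x μ r from rfl, upperHalfBall_eq_image x μ hr,
      volume_image_affine x hr]
  have hvolK : ∀ r : ℝ, 0 < r →
      volume (Bm r ∩ Bp r) = ENNReal.ofReal (r ^ N) * volume K1 := by
    intro r hr
    have : Bm r ∩ Bp r = (fun y : EucN N => x + r • y) '' K1 := by
      rw [hK1, Set.image_inter (hinj r hr), hBm_eq r, hBm0,
        upperHalfBall_eq_image x (-ν) hr]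
      congr 1
      exact upperHalfBall_eq_image x μ hr
    rw [this, volume_image_affine x hr]
  -- positivity and finiteness at scale 1
  have posfin : ∀ S : Set (EucN N), IsOpen S → S.Nonempty → S ⊆ ball 0 1 →
      0 < volume S ∧ volume S < ⊤ := by
    intro S hS hSn hSb
    exact ⟨hS.measure_pos volume hSn, lt_of_le_of_lt (measure_mono hSb) measure_ball_lt_top⟩
  have hBmp := posfin (lowerHalfBall 0 ν 1)
    (hBm0 ▸ isOpen_upperHalfBall 0 (-ν) 1)
    (hBm0 ▸ upperHalfBall_nonempty 0 (-ν) (neg_ne_zero.mpr hν0))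
    (hBm0 ▸ upperHalfBall_subset_ball 0 (-ν) 1)
  have hBpp := posfin (upperHalfBall 0 μ 1) (isOpen_upperHalfBall 0 μ 1)
    (upperHalfBall_nonempty 0 μ hμ0) (upperHalfBall_subset_ball 0 μ 1)
  have hKp := posfin K1 ((hBm0 ▸ isOpen_upperHalfBall 0 (-ν) 1).inter
      (isOpen_upperHalfBall 0 μ 1)) ⟨y₀, hy₀K⟩
    (fun z hz => upperHalfBall_subset_ball 0 μ 1 hz.2)
  set bm : ℝ := (volume (lowerHalfBall 0 ν 1)).toReal with hbm_def
  set bp : ℝ := (volume (upperHalfBall 0 μ 1)).toReal with hbp_def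
  set k : ℝ := (volume K1).toReal with hk_def
  have hbm : 0 < bm := ENNReal.toReal_pos hBmp.1.ne' hBmp.2.ne
  have hbp : 0 < bp := ENNReal.toReal_pos hBpp.1.ne' hBpp.2.ne
  have hk : 0 < k := ENNReal.toReal_pos hKp.1.ne' hKp.2.ne
  have hvolBm' : ∀ r : ℝ, 0 < r → (volume (Bm r)).toReal = r ^ N * bm := by
    intro r hr
    rw [hvolBm r hr, ENNReal.toReal_mul, ENNReal.toReal_ofReal (by positivity)]
  have hvolBp' : ∀ r : ℝ, 0 < r → (volume (Bp r)).toReal = r ^ N * bp := by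
    intro r hr
    rw [hvolBp r hr, ENNReal.toReal_mul, ENNReal.toReal_ofReal (by positivity)]
  have hvolK' : ∀ r : ℝ, 0 < r → (volume (Bm r ∩ Bp r)).toReal = r ^ N * k := by
    intro r hr
    rw [hvolK r hr, ENNReal.toReal_mul, ENNReal.toReal_ofReal (by positivity)]
  have hBmfin : ∀ r : ℝ, volume (Bm r) ≠ ⊤ := by
    intro r
    refine (lt_of_le_of_lt (measure_mono ?_) (measure_ball_lt_top (x := x) (r := r))).ne
    rw [hBm_eq r]; exact upperHalfBall_subset_ball x (-ν) r
  have hBpfin : ∀ r : ℝ, volume (Bp r) ≠ ⊤ := by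
    intro r
    exact (lt_of_le_of_lt (measure_mono (upperHalfBall_subset_ball x μ r))
      (measure_ball_lt_top (x := x) (r := r))).ne
  -- real-valued density limits
  set F : ℝ → ℝ := fun r => (volume (E ∩ Bm r)).toReal / (r ^ N * bm) with hF_def
  set P : ℝ → ℝ := fun r => (volume (E₁ ∩ Bp r)).toReal / (r ^ N * bp) with hP_def
  have hF : Tendsto F (𝓝[>] (0:ℝ)) (𝓝 1) := by
    have h0 := (ENNReal.tendsto_toReal (a := 1) (by norm_num)).comp hνl
    rw [ENNReal.toReal_one] at h0
    refine h0.congr' ?_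
    filter_upwards [self_mem_nhdsWithin] with r hr
    show ((volume (E ∩ Bm r)) / volume (Bm r)).toReal = F r
    rw [ENNReal.toReal_div, hF_def]
    simp only
    rw [hvolBm' r hr]
  have hP : Tendsto P (𝓝[>] (0:ℝ)) (𝓝 0) := by
    have h0 := (ENNReal.tendsto_toReal (a := 0) (by norm_num)).comp hμu
    rw [ENNReal.toReal_zero] at h0
    refine h0.congr' ?_
    filter_upwards [self_mem_nhdsWithin] with r hr
    show ((volume (E₁ ∩ Bp r)) / volume (Bp r)).toReal = P r
    rw [ENNReal.toReal_div, hP_def]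
    simp only
    rw [hvolBp' r hr]
  -- the eventual inequality
  have hineq : ∀ᶠ r in 𝓝[>] (0:ℝ), k ≤ bm * (1 - F r) + bp * P r := by
    filter_upwards [self_mem_nhdsWithin] with r (hr : (0:ℝ) < r)
    have hrN : (0:ℝ) < r ^ N := by positivity
    -- measure bookkeeping
    have hEBmfin : volume (E ∩ Bm r) ≠ ⊤ :=
      (lt_of_le_of_lt (measure_mono Set.inter_subset_right) (hBmfin r).lt_top).ne
    have hdfin : volume (Bm r \ E₁) ≠ ⊤ :=
      (lt_of_le_of_lt (measure_mono Set.diff_subset) (hBmfin r).lt_top).ne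
    have hpfin : volume (E₁ ∩ Bp r) ≠ ⊤ :=
      (lt_of_le_of_lt (measure_mono Set.inter_subset_right) (hBpfin r).lt_top).ne
    have hmeas_d : MeasurableSet (Bm r \ E₁) := by
      rw [hBm_eq r]
      exact (isOpen_upperHalfBall x (-ν) r).measurableSet.diff hE₁m
    have hdisj : Disjoint (E ∩ Bm r) (Bm r \ E₁) :=
      Set.disjoint_left.mpr (fun z hz hz' => hz'.2 (hsub hz.1))
    have hsplit : volume (E ∩ Bm r) + volume (Bm r \ E₁) ≤ volume (Bm r) := by
      rw [← measure_union hdisj hmeas_d]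
      apply measure_mono
      rintro z (hz | hz)
      · exact hz.2
      · exact hz.1
    have hKsub : Bm r ∩ Bp r ⊆ (Bm r \ E₁) ∪ (E₁ ∩ Bp r) := by
      rintro z ⟨hzm, hzp⟩
      by_cases hz : z ∈ E₁
      · exact Or.inr ⟨hz, hzp⟩
      · exact Or.inl ⟨hzm, hz⟩
    have hKle : volume (Bm r ∩ Bp r) ≤ volume (Bm r \ E₁) + volume (E₁ ∩ Bp r) :=
      (measure_mono hKsub).trans (measure_union_le _ _)
    -- pass to reals
    set e : ℝ := (volume (E ∩ Bm r)).toReal with he_def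
    set d : ℝ := (volume (Bm r \ E₁)).toReal with hd_def
    set p : ℝ := (volume (E₁ ∩ Bp r)).toReal with hp_def
    have h1 : r ^ N * k ≤ d + p := by
      rw [← hvolK' r hr, hd_def, hp_def, ← ENNReal.toReal_add hdfin hpfin]
      exact ENNReal.toReal_mono (by simp [ENNReal.add_ne_top, hdfin, hpfin]) hKle
    have h2 : e + d ≤ r ^ N * bm := by
      rw [← hvolBm' r hr, he_def, hd_def, ← ENNReal.toReal_add hEBmfin hdfin]
      exact ENNReal.toReal_mono (hBmfin r) hsplit
    have hFr : F r = e / (r ^ N * bm) := rfl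
    have hPr : P r = p / (r ^ N * bp) := rfl
    rw [hFr, hPr]
    have expand1 : bm * (1 - e / (r ^ N * bm)) = bm - e / r ^ N := by
      field_simp
    have expand2 : bp * (p / (r ^ N * bp)) = p / r ^ N := by
      field_simp
    rw [expand1, expand2]
    rw [← mul_le_mul_iff_of_pos_right hrN]
    have expand3 : (bm - e / r ^ N + p / r ^ N) * r ^ N = bm * r ^ N - e + p := by
      rw [add_mul, sub_mul, div_mul_cancel₀ _ hrN.ne', div_mul_cancel₀ _ hrN.ne']
    rw [expand3]
    nlinarith [h1, h2]
  -- contradiction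
  have hG : Tendsto (fun r => bm * (1 - F r) + bp * P r) (𝓝[>] (0:ℝ)) (𝓝 0) := by
    have hG0 : Tendsto (fun r => bm * (1 - F r) + bp * P r) (𝓝[>] (0:ℝ))
        (𝓝 (bm * (1 - 1) + bp * 0)) :=
      ((tendsto_const_nhds.mul (tendsto_const_nhds.sub hF)).add
        (tendsto_const_nhds.mul hP))
    rw [show bm * (1 - 1) + bp * 0 = 0 by ring] at hG0
    exact hG0
  have : k ≤ 0 := ge_of_tendsto hG hineq
  linarith

end Aux

/-- If `E₁ ⊇ E`, `E₁ ∩ Ω = E ∩ Ω` and a.e. new common boundary point has reversed normal,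
then `Γ⁺_{E₁} = Γ⁺_E ∩ ∂*E₁` up to `H^{N-1}`-null sets. -/
theorem gamma_plus_formula {N : ℕ} (E E₁ Ω : Set (EucN N))
    (hE : HasFinPer E) (hE₁ : HasFinPer E₁) (hΩ : HasFinPer Ω)
    (hsub : E ⊆ E₁) (hcap : E₁ ∩ Ω = E ∩ Ω)
    (hnorm : HN1 N {z ∈ (redBoundary E₁ \ redBoundary E) ∩ redBoundary Ω |
      outerNormal E₁ z ≠ -outerNormal Ω z} = 0) :
    HN1 N ((ΓPlus E₁ Ω \ (ΓPlus E Ω ∩ redBoundary E₁)) ∪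
      ((ΓPlus E Ω ∩ redBoundary E₁) \ ΓPlus E₁ Ω)) = 0 := by
  classical
  have hνΩunit : ∀ x ∈ redBoundary Ω, outerNormal Ω x ≠ 0 := by
    intro x hx h0
    have := (isOuterNormal_outerNormal hx).1
    rw [h0] at this
    simp at this
  have key : ∀ x, x ∈ redBoundary E → x ∈ redBoundary E₁ →
      outerNormal E x = outerNormal E₁ x := fun x hx hx₁ =>
    outerNormal_unique_mono hE.1 hE₁.1 hsub
      (isOuterNormal_outerNormal hx) (isOuterNormal_outerNormal hx₁)
  apply measure_mono_null _ hnorm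
  rintro x (hx | hx)
  · obtain ⟨⟨⟨hxE₁, hxΩ⟩, heq₁⟩, hnot⟩ := hx
    have hxE : x ∉ redBoundary E := by
      intro hxE
      exact hnot ⟨⟨⟨hxE, hxΩ⟩, (key x hxE hxE₁).trans heq₁⟩, hxE₁⟩
    refine ⟨⟨⟨hxE₁, hxE⟩, hxΩ⟩, ?_⟩
    rw [heq₁]
    intro h
    have h2 : (2:ℝ) • outerNormal Ω x = 0 := by
      rw [two_smul]
      nth_rewrite 1 [h]
      simp
    exact hνΩunit x hxΩ
      (by simpa using (smul_eq_zero.mp h2).resolve_left (by norm_num))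
  · obtain ⟨⟨⟨⟨hxE, hxΩ⟩, heq⟩, hxE₁⟩, hnot⟩ := hx
    exact absurd ⟨⟨hxE₁, hxΩ⟩, (key x hxE hxE₁).symm.trans heq⟩ hnot
end
end

section
/- Let Ω be a set of finite perimeter in R^N and η > 0. Then the set U = Ω^{(1)} \ closure({x : dist(x, ∂Ω) < η}) is open, where Ω^{(1)} is the set of points of Lebesgue density 1 of Ω and ∂Ω is the topological boundary. -/
open MeasureTheory Metric Filter Set
open scoped ENNReal Topology NNReal

noncomputable section

variable {N : ℕ}

lemma density_one_of_mem_interior {Ω : Set (EucN N)} {x : EucN N} (hx : x ∈ interior Ω) :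
    Tendsto (fun r => volume (Ω ∩ ball x r) / volume (ball x r)) (𝓝[>] (0:ℝ)) (𝓝 1) := by
  obtain ⟨ε, hε, hball⟩ := Metric.isOpen_iff.1 isOpen_interior x hx
  have hev : ∀ᶠ r in 𝓝[>] (0:ℝ),
      volume (Ω ∩ ball x r) / volume (ball x r) = 1 := by
    filter_upwards [Ioo_mem_nhdsGT_of_mem ⟨le_refl (0:ℝ), hε⟩] with r hr
    have hsub : ball x r ⊆ Ω :=
      (ball_subset_ball hr.2.le).trans (hball.trans interior_subset)
    rw [inter_eq_self_of_subset_right hsub]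
    exact ENNReal.div_self (ne_of_gt (measure_ball_pos _ _ hr.1)) (measure_ball_lt_top).ne
  exact Tendsto.congr' (hev.mono fun r h => h.symm) tendsto_const_nhds

lemma density_zero_of_mem_interior_compl {Ω : Set (EucN N)} {x : EucN N}
    (hx : x ∈ interior Ωᶜ) :
    Tendsto (fun r => volume (Ω ∩ ball x r) / volume (ball x r)) (𝓝[>] (0:ℝ)) (𝓝 0) := by
  obtain ⟨ε, hε, hball⟩ := Metric.isOpen_iff.1 isOpen_interior x hx
  have hev : ∀ᶠ r in 𝓝[>] (0:ℝ),
      volume (Ω ∩ ball x r) / volume (ball x r) = 0 := by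
    filter_upwards [Ioo_mem_nhdsGT_of_mem ⟨le_refl (0:ℝ), hε⟩] with r hr
    have hsub : ball x r ⊆ Ωᶜ :=
      (ball_subset_ball hr.2.le).trans (hball.trans interior_subset)
    have : Ω ∩ ball x r = ∅ := by
      apply eq_empty_of_forall_notMem
      intro z hz
      exact hsub hz.2 hz.1
    rw [this, measure_empty, ENNReal.zero_div]
  exact Tendsto.congr' (hev.mono fun r h => h.symm) tendsto_const_nhds

/-- The set `U = Ω^{(1)} \ closure {x : dist(x,∂Ω) < η}` is open. -/
theorem density_one_minus_nbhd_open {N : ℕ} (Ω : Set (EucN N)) (hΩ : HasFinPer Ω)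
    (η : ℝ) (hη : 0 < η) :
    IsOpen ({x : EucN N | Tendsto (fun r => volume (Ω ∩ ball x r) / volume (ball x r))
        (𝓝[>] (0:ℝ)) (𝓝 1)} \
      closure {x : EucN N | Metric.infDist x (frontier Ω) < η}) := by
  have hEq : ({x : EucN N | Tendsto (fun r => volume (Ω ∩ ball x r) / volume (ball x r))
        (𝓝[>] (0:ℝ)) (𝓝 1)} \
      closure {x : EucN N | Metric.infDist x (frontier Ω) < η})
      = interior Ω \ closure {x : EucN N | Metric.infDist x (frontier Ω) < η} := by
    ext x
    simp only [mem_diff, mem_setOf_eq]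
    constructor
    · rintro ⟨hx, hxc⟩
      refine ⟨?_, hxc⟩
      have hxΓ : ¬ Metric.infDist x (frontier Ω) < η := fun h => hxc (subset_closure h)
      have hxfr : x ∉ frontier Ω := by
        intro hxf
        exact hxΓ (by rwa [Metric.infDist_zero_of_mem hxf])
      by_contra hni
      have hxint : x ∈ interior Ωᶜ := by
        rw [interior_compl, mem_compl_iff]
        intro hcl
        exact hxfr ⟨hcl, hni⟩
      have h0 := density_zero_of_mem_interior_compl hxint
      exact one_ne_zero (tendsto_nhds_unique hx h0)
    · rintro ⟨hx, hxc⟩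
      exact ⟨density_one_of_mem_interior hx, hxc⟩
  rw [hEq]
  exact isOpen_interior.sdiff isClosed_closure
end
end
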